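/- Let Σ ⊂ ℝⁿ be a compact smooth embedded k-dimensional submanifold without boundary with k ≥ 1. Then there exist constants ε₀ > 0 and c₀ > 0 such that for all points p, q ∈ Σ with 0 < |p − q| < ε₀, one has |π_p((p−q)/|p−q|)|² + |π_q((q−p)/|q−p|)|² ≥ c₀. -/

import Mathlib

open scoped RealInnerProductSpace ENNReal
open Set Filter

noncomputable section

/-- Euclidean `n`-space. -/
abbrev Euc (n : ℕ) := EuclideanSpace ℝ (Fin n)

/-- The orthogonal projection `π_K` onto a submodule `K`, as a map `Euc n → Euc n`. -/
def projSM {n : ℕ} (K : Submodule ℝ (Euc n)) (v : Euc n) : Euc n :=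
  (Submodule.orthogonalProjection K v : Euc n)

/-- `S` is a smooth embedded `k`-dimensional submanifold (without boundary) of `ℝⁿ`,
whose tangent space at each `x ∈ S` is the `k`-dimensional subspace `T x ⊆ ℝⁿ`:
every point of `S` has a neighbourhood in `S` which is the image of a smooth injective
parametrization, which is a homeomorphism onto its image, with injective differential whose
range is the assigned tangent space. -/
def IsSubmanifold (n k : ℕ) (S : Set (Euc n)) (T : Euc n → Submodule ℝ (Euc n)) : Prop :=
  ∀ x ∈ S, ∃ (f : Euc k → Euc n) (u : Set (Euc k)) (v : Set (Euc n)),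
    IsOpen u ∧ IsOpen v ∧ x ∈ v ∧ ContDiffOn ℝ (⊤ : ℕ∞) f u ∧ Set.InjOn f u ∧
    f '' u = S ∩ v ∧
    (∀ s ⊆ u, IsOpen s → ∃ w : Set (Euc n), IsOpen w ∧ f '' s = S ∩ w) ∧
    ∀ y ∈ u, Function.Injective (fderiv ℝ f y) ∧
      LinearMap.range ((fderiv ℝ f y) : Euc k →ₗ[ℝ] Euc n) = T (f y)

/-- The tangential part `η^T(x) = π_{T x}((x - y)/|x - y|)` of the outward unit conormal at `x`
of the chord from `x` to `y`. -/
def conormalT {n : ℕ} (T : Euc n → Submodule ℝ (Euc n)) (x y : Euc n) : Euc n :=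
  projSM (T x) (‖x - y‖⁻¹ • (x - y))

/-- A chord shortening flow relative to `S` (with tangent spaces `T`) on the time domain `dom`:
a pair of C¹ curves `p q : dom → S` with `p t ≠ q t`, satisfying
`p' = -π_{p}((p-q)/|p-q|)` and `q' = -π_{q}((q-p)/|q-p|)`. -/
def IsCSFOn {n : ℕ} (S : Set (Euc n)) (T : Euc n → Submodule ℝ (Euc n))
    (dom : Set ℝ) (p q : ℝ → Euc n) : Prop :=
  ∀ t ∈ dom, p t ∈ S ∧ q t ∈ S ∧ p t ≠ q t ∧
    HasDerivWithinAt p (-(conormalT T (p t) (q t))) dom t ∧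
    HasDerivWithinAt q (-(conormalT T (q t) (p t))) dom t

/-- The time interval `[0, Tm)` (where possibly `Tm = ∞`). -/
def csfDomain (Tm : ℝ≥0∞) : Set ℝ := {t : ℝ | 0 ≤ t ∧ ENNReal.ofReal t < Tm}

/-- A maximal chord shortening flow: one defined on `[0, Tm)` which cannot be extended to a
chord shortening flow on a strictly larger interval `[0, Tm')`. -/
def IsMaximalCSF {n : ℕ} (S : Set (Euc n)) (T : Euc n → Submodule ℝ (Euc n))
    (Tm : ℝ≥0∞) (p q : ℝ → Euc n) : Prop :=
  IsCSFOn S T (csfDomain Tm) p q ∧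
  ∀ Tm' : ℝ≥0∞, Tm < Tm' → ∀ p' q' : ℝ → Euc n,
    IsCSFOn S T (csfDomain Tm') p' q' →
    ¬ (∀ t ∈ csfDomain Tm, p' t = p t ∧ q' t = q t)

/-- The nearest-point property of the orthogonal projection. -/
lemma projSM_dist_le {n : ℕ} (K : Submodule ℝ (Euc n)) (v w : Euc n) (hw : w ∈ K) :
    ‖v - projSM K v‖ ≤ ‖v - w‖ := by
  have h := Submodule.starProjection_minimal (U := K) v
  rw [Submodule.starProjection_apply] at h
  rw [projSM, h]
  exact ciInf_le ⟨0, fun z hz => by rcases hz with ⟨i, rfl⟩; positivity⟩ (⟨w, hw⟩ : K)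

/-- Local version of the chord estimate: near each point of `S`, the tangential projection of
any unit chord has squared norm at least `1/2`. -/
lemma chord_local (n k : ℕ) (S : Set (Euc n)) (T : Euc n → Submodule ℝ (Euc n))
    (hsub : IsSubmanifold n k S T) (x : Euc n) (hx : x ∈ S) :
    ∃ r : ℝ, 0 < r ∧ ∀ p ∈ S, ∀ q ∈ S, p ≠ q → p ∈ Metric.ball x r → q ∈ Metric.ball x r →
      (1 : ℝ) / 2 ≤ ‖projSM (T p) (‖p - q‖⁻¹ • (p - q))‖ ^ 2 := by
  obtain ⟨f, u, v, hu, hv, hxv, hf, hfinj, hfim, hopen, hd⟩ := hsub x hx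
  have hxim : x ∈ f '' u := by rw [hfim]; exact ⟨hx, hxv⟩
  obtain ⟨y₀, hy₀u, hy₀⟩ := hxim
  -- antilipschitz bound for the differential at `y₀`
  obtain ⟨K, hK, hKa⟩ :=
    ((fderiv ℝ f y₀ : Euc k →ₗ[ℝ] Euc n)).exists_antilipschitzWith
      (LinearMap.ker_eq_bot.2 (hd y₀ hy₀u).1)
  set c : ℝ := ((K : ℝ))⁻¹ with hc_def
  have hc : 0 < c := by positivity
  have hlow : ∀ w : Euc k, c * ‖w‖ ≤ ‖fderiv ℝ f y₀ w‖ := by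
    intro w
    have h := hKa.le_mul_dist w 0
    simp only [map_zero, dist_zero_right] at h
    have h' : ‖w‖ ≤ (K : ℝ) * ‖fderiv ℝ f y₀ w‖ := h
    rw [hc_def, inv_mul_le_iff₀ (by positivity)]
    linarith [h']
  set ε : ℝ := c / 16 with hε_def
  have hε : 0 < ε := by positivity
  -- continuity of the derivative: choose a ball where `fderiv` is `ε`-close to `fderiv` at `y₀`
  have hcont : ContinuousAt (fderiv ℝ f) y₀ :=
    (hf.continuousOn_fderiv_of_isOpen hu (by exact_mod_cast le_top)).continuousAt (hu.mem_nhds hy₀u)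
  obtain ⟨ρ₁, hρ₁, hρ₁c⟩ := Metric.continuousAt_iff.1 hcont ε hε
  obtain ⟨ρ₂, hρ₂, hρ₂u⟩ := Metric.isOpen_iff.1 hu y₀ hy₀u
  set ρ : ℝ := min ρ₁ ρ₂ with hρ_def
  have hρ : 0 < ρ := lt_min hρ₁ hρ₂
  set s : Set (Euc k) := Metric.ball y₀ ρ with hs_def
  have hsu : s ⊆ u := fun z hz => hρ₂u (Metric.ball_subset_ball (min_le_right _ _) hz)
  have hsb : ∀ z ∈ s, ‖fderiv ℝ f z - fderiv ℝ f y₀‖ ≤ ε := by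
    intro z hz
    have : dist z y₀ < ρ₁ := lt_of_lt_of_le hz (min_le_left _ _)
    have := hρ₁c this
    rw [dist_eq_norm] at this
    exact this.le
  obtain ⟨w, hwopen, hwim⟩ := hopen s hsu Metric.isOpen_ball
  have hxw : x ∈ w := by
    have : x ∈ f '' s := ⟨y₀, Metric.mem_ball_self hρ, hy₀⟩
    rw [hwim] at this; exact this.2
  obtain ⟨r, hr, hrw⟩ := Metric.isOpen_iff.1 hwopen x hxw
  refine ⟨r, hr, ?_⟩
  intro p hp q hq hpq hpr hqr
  -- express `p` and `q` via the chart
  have hpw : p ∈ f '' s := by rw [hwim]; exact ⟨hp, hrw hpr⟩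
  have hqw : q ∈ f '' s := by rw [hwim]; exact ⟨hq, hrw hqr⟩
  obtain ⟨a, has, rfl⟩ := hpw
  obtain ⟨b, hbs, rfl⟩ := hqw
  have hau : a ∈ u := hsu has
  have hdiff : ∀ z ∈ s, DifferentiableAt ℝ f z := fun z hz =>
    (hf.differentiableOn (by simp)).differentiableAt (hu.mem_nhds (hsu hz))
  have hconv : Convex ℝ s := convex_ball _ _
  -- mean value estimates
  have h1 : ‖f a - f b - fderiv ℝ f y₀ (a - b)‖ ≤ ε * ‖a - b‖ :=
    hconv.norm_image_sub_le_of_norm_fderiv_le' hdiff hsb hbs has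
  have hsb2 : ∀ z ∈ s, ‖fderiv ℝ f z - fderiv ℝ f a‖ ≤ 2 * ε := by
    intro z hz
    calc ‖fderiv ℝ f z - fderiv ℝ f a‖
        ≤ ‖fderiv ℝ f z - fderiv ℝ f y₀‖ + ‖fderiv ℝ f y₀ - fderiv ℝ f a‖ :=
          norm_sub_le_norm_sub_add_norm_sub _ _ _
      _ ≤ ε + ε := add_le_add (hsb z hz) (by rw [norm_sub_rev]; exact hsb a has)
      _ = 2 * ε := by ring
  have h2 : ‖f a - f b - fderiv ℝ f a (a - b)‖ ≤ 2 * ε * ‖a - b‖ :=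
    hconv.norm_image_sub_le_of_norm_fderiv_le' hdiff hsb2 hbs has
  set V : Euc n := f a - f b with hV_def
  have hVne : V ≠ 0 := sub_ne_zero.2 hpq
  have hVpos : 0 < ‖V‖ := norm_pos_iff.2 hVne
  have hab : a ≠ b := by rintro rfl; exact hpq rfl
  have habpos : 0 < ‖a - b‖ := norm_pos_iff.2 (sub_ne_zero.2 hab)
  -- lower bound on the chord length
  have hVlow : c / 2 * ‖a - b‖ ≤ ‖V‖ := by
    have h3 : c * ‖a - b‖ ≤ ‖fderiv ℝ f y₀ (a - b)‖ := hlow (a - b)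
    have h4 : ‖fderiv ℝ f y₀ (a - b)‖ ≤ ‖V‖ + ε * ‖a - b‖ := by
      calc ‖fderiv ℝ f y₀ (a - b)‖ = ‖V - (V - fderiv ℝ f y₀ (a - b))‖ := (congrArg norm (sub_sub_cancel V _)).symm
        _ ≤ ‖V‖ + ‖V - fderiv ℝ f y₀ (a - b)‖ := norm_sub_le _ _
        _ ≤ ‖V‖ + ε * ‖a - b‖ := by exact add_le_add_right h1 _
    nlinarith [hε, habpos]
  -- the tangential projection misses `V` by at most `‖V‖/4`
  have hmem : fderiv ℝ f a (a - b) ∈ T (f a) := by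
    rw [← (hd a hau).2]
    exact ⟨a - b, rfl⟩
  have hproj : ‖V - projSM (T (f a)) V‖ ≤ ‖V‖ / 4 := by
    calc ‖V - projSM (T (f a)) V‖ ≤ ‖V - fderiv ℝ f a (a - b)‖ :=
          projSM_dist_le _ _ _ hmem
      _ ≤ 2 * ε * ‖a - b‖ := h2
      _ ≤ ‖V‖ / 4 := by
          have : ε = c / 16 := hε_def
          nlinarith [hVlow, habpos, hc]
  -- conclude for the unit chord
  set e : Euc n := ‖V‖⁻¹ • V with he_def
  have hproj_smul : projSM (T (f a)) e = ‖V‖⁻¹ • projSM (T (f a)) V := by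
    simp [he_def, projSM, map_smul]
  have hediff : ‖e - projSM (T (f a)) e‖ ≤ 1 / 4 := by
    rw [hproj_smul, he_def, ← smul_sub, norm_smul, norm_inv, norm_norm]
    rw [inv_mul_le_iff₀ hVpos]
    calc ‖V - projSM (T (f a)) V‖ ≤ ‖V‖ / 4 := hproj
      _ = ‖V‖ * (1 / 4) := by ring
  have henorm : ‖e‖ = 1 := by
    rw [he_def, norm_smul, norm_inv, norm_norm, inv_mul_cancel₀ (ne_of_gt hVpos)]
  have hge : (3 : ℝ) / 4 ≤ ‖projSM (T (f a)) e‖ := by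
    have := norm_sub_norm_le e (projSM (T (f a)) e)
    have h5 : ‖e‖ - ‖projSM (T (f a)) e‖ ≤ 1 / 4 := le_trans this hediff
    rw [henorm] at h5; linarith
  calc (1 : ℝ) / 2 ≤ (3 / 4 : ℝ) ^ 2 := by norm_num
    _ ≤ ‖projSM (T (f a)) e‖ ^ 2 := by
        apply pow_le_pow_left₀ (by norm_num) hge
  -- (the goal matches since `e = ‖f a - f b‖⁻¹ • (f a - f b)`)

/-- For a compact smooth embedded submanifold `S ⊆ ℝⁿ` of dimension `k ≥ 1`, there are constants
`ε₀, c₀ > 0` such that any chord of length less than `ε₀` has `‖η^T‖² ≥ c₀`. -/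
theorem chord_statement_11 (n k : ℕ) (hk : 1 ≤ k) (S : Set (Euc n))
    (T : Euc n → Submodule ℝ (Euc n)) (hsub : IsSubmanifold n k S T) (hcpt : IsCompact S) :
    ∃ ε₀ : ℝ, 0 < ε₀ ∧ ∃ c₀ : ℝ, 0 < c₀ ∧
      ∀ p ∈ S, ∀ q ∈ S, p ≠ q → ‖p - q‖ < ε₀ →
        c₀ ≤ ‖projSM (T p) (‖p - q‖⁻¹ • (p - q))‖ ^ 2
          + ‖projSM (T q) (‖q - p‖⁻¹ • (q - p))‖ ^ 2 := by
  choose r hr hloc using fun x : S => chord_local n k S T hsub x x.2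
  have hcover : S ⊆ ⋃ x : S, Metric.ball (x : Euc n) (r x) := by
    intro y hy
    exact Set.mem_iUnion.2 ⟨⟨y, hy⟩, Metric.mem_ball_self (hr ⟨y, hy⟩)⟩
  obtain ⟨δ, hδ, hball⟩ :=
    lebesgue_number_lemma_of_metric hcpt (fun x : S => Metric.isOpen_ball) hcover
  refine ⟨δ, hδ, 1 / 2, by norm_num, ?_⟩
  intro p hp q hq hpq hdist
  obtain ⟨x, hx⟩ := hball p hp
  have hpx : p ∈ Metric.ball (x : Euc n) (r x) := hx (Metric.mem_ball_self hδ)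
  have hqx : q ∈ Metric.ball (x : Euc n) (r x) := by
    apply hx
    rw [Metric.mem_ball, dist_eq_norm, norm_sub_rev]
    exact hdist
  have h1 := hloc x p hp q hq hpq hpx hqx
  have h2 : (0 : ℝ) ≤ ‖projSM (T q) (‖q - p‖⁻¹ • (q - p))‖ ^ 2 := sq_nonneg _
  linarith

end
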